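/- A group Γ is amenable if and only if Γ is not paradoxical with respect to its action on itself by left translations. -/

import Mathlib

open scoped Pointwise

/-- Two subsets `A` and `B` of a `G`-set `X` are `G`-equidecomposable if there are
finitely many pairwise disjoint pieces `P i` whose union is `A` and group elements
`g i` such that the translates `g i • P i` are pairwise disjoint with union `B`. -/
def Equidecomposable (G : Type*) [Group G] {X : Type*} [MulAction G X]
    (A B : Set X) : Prop :=
  ∃ (n : ℕ) (P : Fin n → Set X) (g : Fin n → G),
    (∀ i j, i ≠ j → Disjoint (P i) (P j)) ∧
    (⋃ i, P i) = A ∧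
    (∀ i j, i ≠ j → Disjoint (g i • P i) (g j • P j)) ∧
    (⋃ i, g i • P i) = B

/-- `X` is `G`-paradoxical if there are two disjoint subsets of `X`, each
`G`-equidecomposable with all of `X`. -/
def Paradoxical (G : Type*) [Group G] (X : Type*) [MulAction G X] : Prop :=
  ∃ A B : Set X, Disjoint A B ∧
    Equidecomposable G A (Set.univ : Set X) ∧ Equidecomposable G B (Set.univ : Set X)

/-- A group `Γ` is amenable if it admits a finitely additive, left-invariant probability
measure defined on all of its subsets. -/
def Amenable (Γ : Type*) [Group Γ] : Prop :=
  ∃ m : Set Γ → ℝ,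
    (∀ A : Set Γ, 0 ≤ m A) ∧ (∀ A : Set Γ, m A ≤ 1) ∧
    m (Set.univ : Set Γ) = 1 ∧
    (∀ A B : Set Γ, Disjoint A B → m (A ∪ B) = m A + m B) ∧
    (∀ (γ : Γ) (A : Set Γ), m ((γ * ·) '' A) = m A)

open Filter

section Easy
variable {Γ : Type*} [Group Γ]

lemma m_empty (m : Set Γ → ℝ)
    (hadd : ∀ A B : Set Γ, Disjoint A B → m (A ∪ B) = m A + m B) :
    m ∅ = 0 := by
  have := hadd ∅ ∅ (by simp)
  simp at this
  linarith

lemma m_biUnion (m : Set Γ → ℝ)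
    (hadd : ∀ A B : Set Γ, Disjoint A B → m (A ∪ B) = m A + m B)
    {ι : Type*} [DecidableEq ι] (s : Finset ι) (P : ι → Set Γ)
    (hdisj : ∀ i ∈ s, ∀ j ∈ s, i ≠ j → Disjoint (P i) (P j)) :
    m (⋃ i ∈ s, P i) = ∑ i ∈ s, m (P i) := by
  induction s using Finset.cons_induction with
  | empty => simpa using m_empty m hadd
  | cons a s ha ih =>
    rw [Finset.cons_eq_insert, Finset.set_biUnion_insert, Finset.sum_insert ha, hadd,
      ih (fun i hi j hj hij =>
        hdisj i (Finset.mem_cons_of_mem hi) j (Finset.mem_cons_of_mem hj) hij)]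
    · rw [Set.disjoint_iUnion_right]
      intro i
      rw [Set.disjoint_iUnion_right]
      intro hi
      exact hdisj a (Finset.mem_cons_self a s) i (Finset.mem_cons_of_mem hi)
        (fun h => ha (h ▸ hi))

lemma m_equi (m : Set Γ → ℝ)
    (hadd : ∀ A B : Set Γ, Disjoint A B → m (A ∪ B) = m A + m B)
    (hinv : ∀ (γ : Γ) (A : Set Γ), m ((γ * ·) '' A) = m A)
    {A B : Set Γ} (h : Equidecomposable Γ A B) : m A = m B := by
  obtain ⟨n, P, g, hP, hPA, hgP, hgB⟩ := h
  have hsm : ∀ i, m (g i • P i) = m (P i) := by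
    intro i
    have : g i • P i = ((g i) * ·) '' P i := by
      ext x; simp only [Set.mem_smul_set, Set.mem_image, smul_eq_mul]
    rw [this, hinv]
  calc m A = m (⋃ i ∈ Finset.univ, P i) := by rw [← hPA]; simp
    _ = ∑ i, m (P i) := m_biUnion m hadd _ _ (fun i _ j _ hij => hP i j hij)
    _ = ∑ i, m (g i • P i) := by simp [hsm]
    _ = m (⋃ i ∈ Finset.univ, g i • P i) :=
        (m_biUnion m hadd _ _ (fun i _ j _ hij => hgP i j hij)).symm
    _ = m B := by rw [← hgB]; simp

lemma amenable_not_para {Γ : Type*} [Group Γ] (h : Amenable Γ) : ¬ Paradoxical Γ Γ := by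
  obtain ⟨m, hpos, hle, huniv, hadd, hinv⟩ := h
  rintro ⟨A, B, hAB, hA, hB⟩
  have h1 : m A = 1 := (m_equi m hadd hinv hA).trans huniv
  have h2 : m B = 1 := (m_equi m hadd hinv hB).trans huniv
  have := hadd A B hAB
  have := hle (A ∪ B)
  linarith
end Easy


section Hard
variable {Γ : Type*} [Group Γ]

lemma doubling_paradoxical [DecidableEq Γ] (T : Finset Γ)
    (hT : ∀ F : Finset Γ, F.Nonempty → 2 * F.card ≤ (T * F).card) :
    Paradoxical Γ Γ := by
  classical
  -- Hall's condition
  set t : Γ × Bool → Finset Γ := fun p => T.image (· * p.1) with ht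
  have hall : ∀ s : Finset (Γ × Bool), s.card ≤ (s.biUnion t).card := by
    intro s
    rcases s.eq_empty_or_nonempty with rfl | hs
    · simp
    set F := s.image Prod.fst with hF
    have hFne : F.Nonempty := hs.image _
    have h1 : s.card ≤ 2 * F.card := by
      calc s.card ≤ (F ×ˢ (Finset.univ : Finset Bool)).card := by
            apply Finset.card_le_card
            intro p hp
            exact Finset.mem_product.2 ⟨Finset.mem_image_of_mem _ hp, Finset.mem_univ _⟩
        _ = 2 * F.card := by
            rw [Finset.card_product]
            simp [mul_comm]
    have h2 : T * F ⊆ s.biUnion t := by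
      intro a ha
      rw [Finset.mem_mul] at ha
      obtain ⟨u, hu, x, hx, rfl⟩ := ha
      obtain ⟨p, hp, rfl⟩ := Finset.mem_image.1 hx
      exact Finset.mem_biUnion.2 ⟨p, hp, Finset.mem_image.2 ⟨u, hu, rfl⟩⟩
    calc s.card ≤ 2 * F.card := h1
      _ ≤ (T * F).card := hT F hFne
      _ ≤ (s.biUnion t).card := Finset.card_le_card h2
  obtain ⟨f, hfinj, hf⟩ := (Finset.all_card_le_biUnion_card_iff_exists_injective t).1 hall
  -- choice of translation element
  have hf' : ∀ p : Γ × Bool, ∃ u, u ∈ T ∧ u * p.1 = f p := by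
    intro p
    obtain ⟨u, hu, hu'⟩ := Finset.mem_image.1 (hf p)
    exact ⟨u, hu, hu'⟩
  set τ : Γ × Bool → Γ := fun p => (hf' p).choose with hτdef
  have hτT : ∀ p, τ p ∈ T := fun p => (hf' p).choose_spec.1
  have hτ : ∀ p, τ p * p.1 = f p := fun p => (hf' p).choose_spec.2
  set n := T.card
  set e : Fin n → Γ := fun i => ((T.equivFin.symm i : T) : Γ) with he
  have heinj : Function.Injective e := fun i j hij => by
    apply T.equivFin.symm.injective
    exact Subtype.ext hij
  have heT : ∀ u ∈ T, ∃ i, e i = u := by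
    intro u hu
    exact ⟨T.equivFin ⟨u, hu⟩, by simp [he]⟩
  -- the construction
  have main : ∀ b : Bool, Equidecomposable Γ (Set.range fun x => f (x, b)) Set.univ := by
    intro b
    set S : Fin n → Set Γ := fun i => {x | τ (x, b) = e i} with hS
    refine ⟨n, fun i => e i • S i, fun i => (e i)⁻¹, ?_, ?_, ?_, ?_⟩
    · intro i j hij
      rw [Set.disjoint_left]
      rintro z ⟨x, hx, rfl⟩ ⟨y, hy, hxy⟩
      simp only [hS, Set.mem_setOf_eq] at hx hy
      simp only [smul_eq_mul] at hxy
      have hfx : f (x, b) = e i * x := by rw [← hτ (x, b), hx]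
      have hfy : f (y, b) = e j * y := by rw [← hτ (y, b), hy]
      have : f (y, b) = f (x, b) := by rw [hfx, hfy, hxy]
      have hyx : y = x := congrArg Prod.fst (hfinj this)
      exact hij (heinj (by rw [← hx, ← hy, hyx]))
    · ext z
      simp only [Set.mem_iUnion, Set.mem_range]
      constructor
      · rintro ⟨i, x, hx, rfl⟩
        simp only [hS, Set.mem_setOf_eq] at hx
        exact ⟨x, by simp only [smul_eq_mul]; rw [← hτ (x, b), hx]⟩
      · rintro ⟨x, rfl⟩
        obtain ⟨i, hi⟩ := heT (τ (x, b)) (hτT (x, b))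
        exact ⟨i, x, by simp [hS, hi.symm], by simp only [smul_eq_mul]; rw [hi, hτ (x, b)]⟩
    · intro i j hij
      rw [inv_smul_smul, inv_smul_smul, Set.disjoint_left]
      intro x hx hy
      simp only [hS, Set.mem_setOf_eq] at hx hy
      exact hij (heinj (hx ▸ hy))
    · ext x
      simp only [Set.mem_iUnion, inv_smul_smul, Set.mem_univ, iff_true]
      obtain ⟨i, hi⟩ := heT (τ (x, b)) (hτT (x, b))
      exact ⟨i, hi.symm⟩
  refine ⟨Set.range fun x => f (x, false), Set.range fun x => f (x, true), ?_,
    main false, main true⟩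
  rw [Set.disjoint_left]
  rintro z ⟨x, rfl⟩ ⟨y, hy⟩
  have := hfinj hy
  simpa using congrArg Prod.snd this

lemma exists_folner [DecidableEq Γ]
    (hnd : ∀ T : Finset Γ, ∃ F : Finset Γ, F.Nonempty ∧ (T * F).card < 2 * F.card)
    (S : Finset Γ) {ε : ℝ} (hε : 0 < ε) :
    ∃ F : Finset Γ, F.Nonempty ∧
      ∀ s ∈ S, (((s • F) \ F).card : ℝ) ≤ ε * F.card := by
  obtain ⟨n, hn⟩ := pow_unbounded_of_one_lt (2 : ℝ) (by linarith : (1 : ℝ) < 1 + ε)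
  set S' : Finset Γ := insert 1 S with hS'
  obtain ⟨F0, hF0ne, hF0⟩ := hnd (S' ^ n)
  set Fk : ℕ → Finset Γ := fun k => S' ^ k * F0 with hFk
  have hFk0 : Fk 0 = F0 := by simp [hFk]
  have hFkne : ∀ k, (Fk k).Nonempty := by
    intro k
    apply Finset.Nonempty.mul _ hF0ne
    exact Finset.Nonempty.pow ⟨1, Finset.mem_insert_self 1 S⟩
  have hsucc : ∀ k, Fk (k + 1) = S' * Fk k := by
    intro k
    rw [hFk]
    simp only
    rw [pow_succ', mul_assoc]
  have hsub : ∀ k, Fk k ⊆ Fk (k + 1) := by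
    intro k
    rw [hsucc k]
    intro x hx
    rw [Finset.mem_mul]
    exact ⟨1, Finset.mem_insert_self 1 S, x, hx, one_mul x⟩
  have key : ∃ k, ((Fk (k + 1)).card : ℝ) ≤ (1 + ε) * (Fk k).card := by
    by_contra hcon
    push_neg at hcon
    have grow : ∀ k, (1 + ε) ^ k * (F0.card : ℝ) ≤ (Fk k).card := by
      intro k
      induction k with
      | zero => simp [hFk0]
      | succ k ih =>
        calc (1 + ε) ^ (k + 1) * (F0.card : ℝ)
            = (1 + ε) * ((1 + ε) ^ k * F0.card) := by ring
          _ ≤ (1 + ε) * (Fk k).card := by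
              apply mul_le_mul_of_nonneg_left ih (by linarith)
          _ ≤ (Fk (k + 1)).card := le_of_lt (hcon k)
    have h1 : (2 : ℝ) * F0.card ≤ (Fk n).card := by
      calc (2 : ℝ) * F0.card ≤ (1 + ε) ^ n * F0.card := by
            apply mul_le_mul_of_nonneg_right (le_of_lt hn) (by positivity)
        _ ≤ (Fk n).card := grow n
    have h2 : ((Fk n).card : ℝ) < 2 * F0.card := by
      exact_mod_cast hF0
    linarith
  obtain ⟨k, hk⟩ := key
  refine ⟨Fk k, hFkne k, ?_⟩
  intro s hs
  have hsF : s • Fk k ⊆ Fk (k + 1) := by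
    rw [hsucc k]
    intro x hx
    rw [Finset.mem_smul_finset] at hx
    obtain ⟨y, hy, rfl⟩ := hx
    rw [Finset.mem_mul]
    exact ⟨s, Finset.mem_insert_of_mem hs, y, hy, rfl⟩
  have hd : (s • Fk k) \ Fk k ⊆ Fk (k + 1) \ Fk k :=
    Finset.sdiff_subset_sdiff hsF (le_refl _)
  have hcard : (((s • Fk k) \ Fk k).card : ℝ) ≤ ((Fk (k + 1)).card : ℝ) - (Fk k).card := by
    have h3 := Finset.card_le_card hd
    have h4 : (Fk (k + 1) \ Fk k).card = (Fk (k + 1)).card - (Fk k).card :=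
      Finset.card_sdiff_of_subset (hsub k)
    have h5 := Finset.card_le_card (hsub k)
    rw [h4] at h3
    have : (((Fk (k + 1)).card - (Fk k).card : ℕ) : ℝ) = ((Fk (k + 1)).card : ℝ) - (Fk k).card := Nat.cast_sub h5
    calc (((s • Fk k) \ Fk k).card : ℝ) ≤ (((Fk (k + 1)).card - (Fk k).card : ℕ) : ℝ) := by
          exact_mod_cast h3
      _ = ((Fk (k + 1)).card : ℝ) - (Fk k).card := this
  calc (((s • Fk k) \ Fk k).card : ℝ) ≤ ((Fk (k + 1)).card : ℝ) - (Fk k).card := hcard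
    _ ≤ (1 + ε) * (Fk k).card - (Fk k).card := by linarith
    _ = ε * (Fk k).card := by ring

lemma folner_amenable [DecidableEq Γ]
    (h : ∀ (S : Finset Γ) (ε : ℝ), 0 < ε → ∃ F : Finset Γ, F.Nonempty ∧
      ∀ s ∈ S, (((s • F) \ F).card : ℝ) ≤ ε * F.card) :
    Amenable Γ := by
  classical
  letI instDec : ∀ C : Set Γ, DecidablePred (· ∈ C) := fun C x => Classical.propDecidable _
  choose F hFne hFs using fun i : Finset Γ × ℕ =>
    h i.1 (1 / (i.2 + 1)) (by positivity)
  set d : Finset Γ × ℕ → ℝ := fun i => ((F i).card : ℝ) with hd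
  have hdpos : ∀ i, 0 < d i := fun i => by
    simp only [hd, Nat.cast_pos, Finset.card_pos]
    exact hFne i
  set μ : Finset Γ × ℕ → Set Γ → ℝ :=
    fun i A => (((F i).filter (· ∈ A)).card : ℝ) / d i with hμ
  have hμ01 : ∀ i A, μ i A ∈ Set.Icc (0 : ℝ) 1 := by
    intro i A
    constructor
    · exact div_nonneg (Nat.cast_nonneg _) (le_of_lt (hdpos i))
    · rw [div_le_one (hdpos i)]
      show (((F i).filter (· ∈ A)).card : ℝ) ≤ ((F i).card : ℝ)
      exact_mod_cast Finset.card_le_card (Finset.filter_subset _ _)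
  haveI : Nonempty (Finset Γ × ℕ) := ⟨(∅, 0)⟩
  set U : Ultrafilter (Finset Γ × ℕ) := Ultrafilter.of atTop with hUdef
  have hU : (U : Filter (Finset Γ × ℕ)) ≤ atTop := Ultrafilter.of_le _
  have hex : ∀ A : Set Γ, ∃ x ∈ Set.Icc (0 : ℝ) 1,
      Tendsto (fun i => μ i A) U (nhds x) := by
    intro A
    have hc := isCompact_Icc (a := (0 : ℝ)) (b := 1)
    have hprin : (U.map (fun i => μ i A) : Filter ℝ) ≤ 𝓟 (Set.Icc 0 1) := by
      rw [Filter.le_principal_iff, Ultrafilter.coe_map, Filter.mem_map]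
      exact Filter.univ_mem' (fun i => hμ01 i A)
    obtain ⟨x, hx, hle⟩ := isCompact_iff_ultrafilter_le_nhds.mp hc _ hprin
    exact ⟨x, hx, hle⟩
  choose m hmIcc hm using hex
  refine ⟨m, fun A => (hmIcc A).1, fun A => (hmIcc A).2, ?_, ?_, ?_⟩
  · -- m univ = 1
    have : (fun i => μ i (Set.univ : Set Γ)) = fun _ => (1 : ℝ) := by
      funext i
      simp only [hμ, Set.mem_univ, Finset.filter_true_of_mem (fun x _ => trivial)]
      exact div_self (ne_of_gt (hdpos i))
    have h2 : Tendsto (fun i => μ i (Set.univ : Set Γ)) U (nhds 1) := by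
      rw [this]; exact tendsto_const_nhds
    exact tendsto_nhds_unique (hm _) h2
  · -- additivity
    intro A B hAB
    have heq : ∀ i, μ i (A ∪ B) = μ i A + μ i B := by
      intro i
      have hdisj : Disjoint ((F i).filter (· ∈ A)) ((F i).filter (· ∈ B)) := by
        rw [Finset.disjoint_left]
        intro a ha hb
        exact Set.disjoint_left.1 hAB (Finset.mem_filter.1 ha).2 (Finset.mem_filter.1 hb).2
      have hfil : (F i).filter (· ∈ A ∪ B) = (F i).filter (· ∈ A) ∪ (F i).filter (· ∈ B) := by
        ext x
        simp only [Finset.mem_filter, Finset.mem_union, Set.mem_union, and_or_left]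
      have hcards : (((F i).filter (· ∈ A ∪ B)).card : ℝ)
          = (((F i).filter (· ∈ A)).card : ℝ) + ((F i).filter (· ∈ B)).card := by
        rw [hfil, Finset.card_union_of_disjoint hdisj]
        push_cast; ring
      simp only [hμ]
      rw [← add_div, hcards]
    have h2 : Tendsto (fun i => μ i (A ∪ B)) U (nhds (m A + m B)) := by
      have := (hm A).add (hm B)
      simpa only [← heq] using this
    exact tendsto_nhds_unique (hm _) h2
  · -- invariance
    intro γ A
    -- counting identity
    have hcount : ∀ i, ((F i).filter (· ∈ (γ * ·) '' A)).card
        = ((γ⁻¹ • F i).filter (· ∈ A)).card := by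
      intro i
      have himg : (γ⁻¹ • F i).filter (· ∈ A)
          = ((F i).filter (· ∈ (γ * ·) '' A)).image (γ⁻¹ * ·) := by
        ext y
        simp only [Finset.mem_filter, Finset.mem_image, Finset.mem_smul_finset,
          smul_eq_mul, Set.mem_image]
        constructor
        · rintro ⟨⟨b, hb, rfl⟩, hy⟩
          exact ⟨b, ⟨hb, ⟨γ⁻¹ * b, hy, by group⟩⟩, rfl⟩
        · rintro ⟨x, ⟨hxF, a, haA, rfl⟩, rfl⟩
          refine ⟨⟨γ * a, hxF, rfl⟩, ?_⟩
          simpa using haA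
      rw [himg, Finset.card_image_of_injective _ (mul_right_injective γ⁻¹)]
    -- difference bound
    have hbound : ∀ N : ℕ, ∀ i : Finset Γ × ℕ, (({γ, γ⁻¹} : Finset Γ), N) ≤ i →
        |μ i ((γ * ·) '' A) - μ i A| ≤ 1 / ((N : ℝ) + 1) := by
      intro N i hi
      have hsub : ({γ, γ⁻¹} : Finset Γ) ⊆ i.1 := hi.1
      have hN : N ≤ i.2 := hi.2
      have hγ : γ ∈ i.1 := hsub (Finset.mem_insert_self _ _)
      have hγinv : γ⁻¹ ∈ i.1 := hsub (by simp)
      set c1 : ℝ := (((γ⁻¹ • F i).filter (· ∈ A)).card : ℝ) with hc1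
      set c2 : ℝ := (((F i).filter (· ∈ A)).card : ℝ) with hc2
      have hb1 : c1 ≤ c2 + (((γ⁻¹ • F i) \ F i).card : ℝ) := by
        have hsub1 : (γ⁻¹ • F i).filter (· ∈ A) ⊆
            (F i).filter (· ∈ A) ∪ ((γ⁻¹ • F i) \ F i) := by
          intro x hx
          obtain ⟨hxm, hxA⟩ := Finset.mem_filter.1 hx
          by_cases hxF : x ∈ F i
          · exact Finset.mem_union_left _ (Finset.mem_filter.2 ⟨hxF, hxA⟩)
          · exact Finset.mem_union_right _ (Finset.mem_sdiff.2 ⟨hxm, hxF⟩)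
        have := (Finset.card_le_card hsub1).trans (Finset.card_union_le _ _)
        rw [hc1, hc2]
        exact_mod_cast this
      have hb2 : c2 ≤ c1 + ((F i \ (γ⁻¹ • F i)).card : ℝ) := by
        have hsub2 : (F i).filter (· ∈ A) ⊆
            (γ⁻¹ • F i).filter (· ∈ A) ∪ (F i \ (γ⁻¹ • F i)) := by
          intro x hx
          obtain ⟨hxm, hxA⟩ := Finset.mem_filter.1 hx
          by_cases hxF : x ∈ γ⁻¹ • F i
          · exact Finset.mem_union_left _ (Finset.mem_filter.2 ⟨hxF, hxA⟩)
          · exact Finset.mem_union_right _ (Finset.mem_sdiff.2 ⟨hxm, hxF⟩)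
        have := (Finset.card_le_card hsub2).trans (Finset.card_union_le _ _)
        rw [hc1, hc2]
        exact_mod_cast this
      have h1 : (((γ⁻¹ • F i) \ F i).card : ℝ) ≤ 1 / ((i.2 : ℝ) + 1) * (F i).card :=
        hFs i γ⁻¹ hγinv
      have h2 : ((F i \ (γ⁻¹ • F i)).card : ℝ) ≤ 1 / ((i.2 : ℝ) + 1) * (F i).card := by
        have hsm : γ • (F i \ (γ⁻¹ • F i)) = (γ • F i) \ F i := by
          rw [Finset.smul_finset_sdiff, smul_inv_smul]
        have hcardeq : (F i \ (γ⁻¹ • F i)).card = ((γ • F i) \ F i).card := by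
          rw [← hsm, Finset.card_smul_finset]
        rw [hcardeq]
        exact hFs i γ hγ
      have habs : |c1 - c2| ≤ 1 / ((i.2 : ℝ) + 1) * d i := by
        rw [abs_sub_le_iff]
        constructor <;> [linarith; linarith]
      have e1 : μ i ((γ * ·) '' A) - μ i A = (c1 - c2) / d i := by
        simp only [hμ]
        rw [hcount i, hc1, hc2]
        ring
      rw [e1, abs_div, abs_of_pos (hdpos i), div_le_iff₀ (hdpos i)]
      calc |c1 - c2| ≤ 1 / ((i.2 : ℝ) + 1) * d i := habs
        _ ≤ 1 / ((N : ℝ) + 1) * d i := by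
            apply mul_le_mul_of_nonneg_right _ (le_of_lt (hdpos i))
            apply one_div_le_one_div_of_le (by positivity)
            have : (N : ℝ) ≤ i.2 := by exact_mod_cast hN
            linarith
    have hzero : Tendsto (fun i => μ i ((γ * ·) '' A) - μ i A) U (nhds 0) := by
      rw [Metric.tendsto_nhds]
      intro δ hδ
      obtain ⟨N, hNδ⟩ := exists_nat_one_div_lt hδ
      have hev : ∀ᶠ i in (atTop : Filter (Finset Γ × ℕ)),
          (({γ, γ⁻¹} : Finset Γ), N) ≤ i := eventually_ge_atTop _
      apply (hev.filter_mono hU).mono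
      intro i hi
      rw [Real.dist_eq, sub_zero]
      exact lt_of_le_of_lt (hbound N i hi) hNδ
    have := tendsto_nhds_unique ((hm ((γ * ·) '' A)).sub (hm A)) hzero
    linarith

end Hard

/-- A group is amenable if and only if it is not paradoxical with respect to its action
on itself by left translations. -/
theorem amenable_iff_not_paradoxical {Γ : Type*} [Group Γ] :
    Amenable Γ ↔ ¬ Paradoxical Γ Γ := by
  letI : DecidableEq Γ := Classical.decEq Γ
  constructor
  · exact amenable_not_para
  · intro hnp
    by_cases hd : ∃ T : Finset Γ, ∀ F : Finset Γ, F.Nonempty → 2 * F.card ≤ (T * F).card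
    · obtain ⟨T, hT⟩ := hd
      exact absurd (doubling_paradoxical T hT) hnp
    · push_neg at hd
      have hd' : ∀ T : Finset Γ, ∃ F : Finset Γ, F.Nonempty ∧ (T * F).card < 2 * F.card := by
        intro T
        obtain ⟨F, hne, hlt⟩ := hd T
        exact ⟨F, hne, hlt⟩
      apply folner_amenable
      intro S ε hε
      exact exists_folner hd' S hε
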